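/- Let π be a k-permutation and τ an m-permutation. Consider the (3,m)-election with candidates c_1,…,c_m and votes V1 = V2 = c_1 > c_2 > … > c_m and V3 = c_{τ(1)} > … > c_{τ(m)}, and the (3,k)-configuration with elements x_1,…,x_k and orders T1 = T2 = x_1 > … > x_k and T3 = x_{π(1)} > … > x_{π(k)}. Then the election contains the configuration if and only if τ contains π as a permutation pattern. -/

import Mathlib

structure Election where
  nvoters : ℕ
  ncands : ℕ
  votes : Fin nvoters → Equiv.Perm (Fin ncands)

def ElectionContains (E F : Election) : Prop :=
  ∃ f : Fin F.nvoters → Fin E.nvoters, ∃ g : Fin F.ncands → Fin E.ncands,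
    Function.Injective f ∧ Function.Injective g ∧
    ∀ (i : Fin F.nvoters) (x y : Fin F.ncands),
      F.votes i x < F.votes i y → E.votes (f i) (g x) < E.votes (f i) (g y)

/-- The `m`-permutation `τ` contains the `k`-permutation `π` as a pattern:
there is a strictly increasing `μ : Fin k → Fin m` such that
`(μ(π 0), …, μ(π (k-1)))` is a subsequence of `(τ 0, …, τ (m-1))`,
the positions of the subsequence being given by a strictly increasing `ρ`. -/
def PatternContains {m k : ℕ} (τ : Equiv.Perm (Fin m)) (π : Equiv.Perm (Fin k)) : Prop :=
  ∃ μ ρ : Fin k → Fin m, StrictMono μ ∧ StrictMono ρ ∧ ∀ j, τ (ρ j) = μ (π j)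

lemma aux_vec {α : Type*} (a b : α) (v : Fin 3) (h : v ≠ 2) : ![a, a, b] v = a := by
  fin_cases v <;> simp_all

lemma aux_vec2 {α : Type*} (a b : α) (v : Fin 3) (h : v = 2) : ![a, a, b] v = b := by
  subst h; rfl

/-- The `(3,m)`-election with votes `V1 = V2 = c_1 > … > c_m`,
`V3 = c_{τ(1)} > … > c_{τ(m)}` (as rank functions: `V1 = V2 = id`, `V3 = τ⁻¹`)
contains the `(3,k)`-configuration with orders `T1 = T2 = x_1 > … > x_k`,
`T3 = x_{π(1)} > … > x_{π(k)}` if and only if `τ` contains `π` as a pattern. -/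
theorem election_contains_iff_pattern (k m : ℕ)
    (π : Equiv.Perm (Fin k)) (τ : Equiv.Perm (Fin m)) :
    ElectionContains ⟨3, m, ![1, 1, τ⁻¹]⟩ ⟨3, k, ![1, 1, π⁻¹]⟩ ↔
      PatternContains τ π := by
  constructor
  · rintro ⟨f, g, hf, hg, hcond⟩
    replace hcond : ∀ (i : Fin 3) (x y : Fin k),
        (![1, 1, π⁻¹] i) x < (![1, 1, π⁻¹] i) y →
          (![1, 1, τ⁻¹] (f i)) (g x) < (![1, 1, τ⁻¹] (f i)) (g y) := hcond
    -- consequences of hcond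
    have hid : ∀ i : Fin 3, i ≠ 2 → f i ≠ 2 → StrictMono g := by
      intro i hi hfi x y hxy
      have := hcond i x y
      rw [aux_vec _ _ i hi, aux_vec _ _ (f i) hfi] at this
      simpa using this (by simpa using hxy)
    have hA : ∀ i : Fin 3, i ≠ 2 → f i = 2 → StrictMono (fun x => τ⁻¹ (g x)) := by
      intro i hi hfi x y hxy
      have := hcond i x y
      rw [aux_vec _ _ i hi, aux_vec2 _ _ (f i) hfi] at this
      simpa using this (by simpa using hxy)
    have hB : f 2 = 2 → ∀ x y, π⁻¹ x < π⁻¹ y → τ⁻¹ (g x) < τ⁻¹ (g y) := by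
      intro h2 x y hxy
      have := hcond 2 x y
      rw [aux_vec2 _ _ (2 : Fin 3) rfl, aux_vec2 _ _ (f 2) h2] at this
      exact this hxy
    have hC : f 2 ≠ 2 → ∀ x y, π⁻¹ x < π⁻¹ y → g x < g y := by
      intro h2 x y hxy
      have := hcond 2 x y
      rw [aux_vec2 _ _ (2 : Fin 3) rfl, aux_vec _ _ (f 2) h2] at this
      simpa using this hxy
    by_cases h2 : f 2 = 2
    · have hgmono : StrictMono g := by
        refine hid 0 (by decide) ?_
        intro h; exact (by decide : (0:Fin 3) ≠ 2) (hf (h.trans h2.symm))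
      refine ⟨g, fun j => τ⁻¹ (g (π j)), hgmono, ?_, ?_⟩
      · intro j j' hjj'
        exact hB h2 (π j) (π j') (by simpa using hjj')
      · intro j; simp
    · -- f 2 ≠ 2, so some a ∈ {0,1} with f a = 2
      have hgmono : StrictMono g := by
        by_cases h0 : f 0 = 2
        · refine hid 1 (by decide) ?_
          intro h; exact (by decide : (1:Fin 3) ≠ 0) (hf (h.trans h0.symm))
        · exact hid 0 (by decide) h0
      have hτg : StrictMono (fun x => τ⁻¹ (g x)) := by
        by_cases h0 : f 0 = 2
        · exact hA 0 (by decide) h0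
        · by_cases h1 : f 1 = 2
          · exact hA 1 (by decide) h1
          · exfalso
            have e01 : f 0 ≠ f 1 := fun h => (by decide : (0:Fin 3) ≠ 1) (hf h)
            have e02 : f 0 ≠ f 2 := fun h => (by decide : (0:Fin 3) ≠ 2) (hf h)
            have e12 : f 1 ≠ f 2 := fun h => (by decide : (1:Fin 3) ≠ 2) (hf h)
            have v0 : (f 0).val < 3 := (f 0).isLt
            have v1 : (f 1).val < 3 := (f 1).isLt
            have v2 : (f 2).val < 3 := (f 2).isLt
            have n0 : (f 0).val ≠ 2 := fun h => h0 (Fin.ext h)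
            have n1 : (f 1).val ≠ 2 := fun h => h1 (Fin.ext h)
            have n2 : (f 2).val ≠ 2 := fun h => h2 (Fin.ext h)
            have d01 : (f 0).val ≠ (f 1).val := fun h => e01 (Fin.ext h)
            have d02 : (f 0).val ≠ (f 2).val := fun h => e02 (Fin.ext h)
            have d12 : (f 1).val ≠ (f 2).val := fun h => e12 (Fin.ext h)
            omega
      refine ⟨g, fun j => τ⁻¹ (g (π j)), hgmono, ?_, ?_⟩
      · intro j j' hjj'
        have h1 : g (π j) < g (π j') := hC h2 (π j) (π j') (by simpa using hjj')
        have h3 : π j < π j' := hgmono.lt_iff_lt.mp h1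
        exact hτg h3
      · intro j; simp
  · rintro ⟨μ, ρ, hμ, hρ, hτρ⟩
    refine ⟨id, μ, Function.injective_id, hμ.injective, ?_⟩
    intro i x y hxy
    have key : ∀ z, τ⁻¹ (μ z) = ρ (π⁻¹ z) := by
      intro z
      have := hτρ (π⁻¹ z)
      rw [show π (π⁻¹ z) = z by simp] at this
      rw [← this, show τ⁻¹ (τ (ρ (π⁻¹ z))) = ρ (π⁻¹ z) by simp]
    replace hxy : (![1, 1, π⁻¹] i) x < (![1, 1, π⁻¹] i) y := hxy
    show (![1, 1, τ⁻¹] i) (μ x) < (![1, 1, τ⁻¹] i) (μ y)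
    by_cases hi : i = 2
    · rw [aux_vec2 _ _ i hi] at hxy ⊢
      rw [key x, key y]
      exact hρ hxy
    · rw [aux_vec _ _ i hi] at hxy ⊢
      simpa using hμ (by simpa using hxy)
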